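/- Let n ≥ 1, let (h_{k,ℓ})_{0≤ℓ<k≤n+1} be a non-decreasing triangular array of reals (meaning h_{k,ℓ} ≤ h_{k',ℓ'} whenever k ≤ k' and ℓ ≤ ℓ'), and let h ≥ h_{n+1,n}. Then the second order branching clustering function Φ on 𝕃₀⁽ⁿ⁾ with parameters (h_{k,ℓ}) and h is a monotone clustering function: A ≺ B implies Φ(A) ≤ Φ(B) for all A,B ⊆ 𝕃₀⁽ⁿ⁾ with |A| = |B|, and Φ(A∪B) ≤ Φ(A) + Φ(B) for all disjoint A,B ⊆ 𝕃₀⁽ⁿ⁾. -/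

import Mathlib

open Filter
open scoped Classical

noncomputable section

namespace PWC

/-- Leaves of the binary tree `𝕋⁽ⁿ⁾` of depth `n`: binary words of length `n`
(coordinate `0` is the first step away from the root). -/
abbrev Leaf (n : ℕ) := Fin n → Bool

/-- The age (distance from the leaves) of the youngest common ancestor `u ∧ v` of two
leaves: `n` minus the length of their longest common prefix. -/
def meetAge {n : ℕ} (u v : Leaf n) : ℕ :=
  if u = v then 0 else n - sInf {i : ℕ | ∃ h : i < n, u ⟨i, h⟩ ≠ v ⟨i, h⟩}

/-- Canonical representative (as a leaf) of the ancestor of `u` at age `k`: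
keep the first `n - k` coordinates and pad by `false`. -/
def trunc {n : ℕ} (k : ℕ) (u : Leaf n) : Leaf n :=
  fun i => if (i : ℕ) < n - k then u i else false

/-- The branching points `ℬ(A) ∩ 𝕃_k` of `A` of age `k`, encoded by the canonical
representatives of the corresponding ancestors. -/
def branchPts {n : ℕ} (A : Finset (Leaf n)) (k : ℕ) : Finset (Leaf n) :=
  ((A ×ˢ A).filter (fun p => meetAge p.1 p.2 = k)).image (fun p => trunc k p.1)

/-- `b_k(A)`: the number of branching points of `A` of age `k`. -/
def bcount {n : ℕ} (A : Finset (Leaf n)) (k : ℕ) : ℕ := (branchPts A k).card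

/-- `b_{k,ℓ}(A)`: the number of branching points of `A` of age `ℓ` whose direct
branching ancestor has age `k`; for `k = n+1` the indicator that the oldest branching
point of `A` has age `ℓ` (i.e. the branching points at age `ℓ` having no strictly older
branching ancestor). -/
def b2count {n : ℕ} (A : Finset (Leaf n)) (k l : ℕ) : ℕ :=
  if k = n + 1 then
    ((branchPts A l).filter (fun w => ∀ j, l < j → j ≤ n → trunc j w ∉ branchPts A j)).card
  else
    ((branchPts A l).filter (fun w => trunc k w ∈ branchPts A k ∧
      ∀ j, l < j → j < k → trunc j w ∉ branchPts A j)).card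

/-- `A ≺ B` : `A` is more clustered than `B`. -/
def MoreClustered {n : ℕ} (A B : Finset (Leaf n)) : Prop :=
  ∃ σ : Leaf n → Leaf n, Set.BijOn σ ↑A ↑B ∧
    ∀ u ∈ A, ∀ v ∈ A, meetAge u v ≤ meetAge (σ u) (σ v)

/-- `A ∼ B` : the subtrees of `𝕋⁽ⁿ⁾` generated by `A` and `B` are graph-isomorphic,
i.e. there is a bijection of the leaf sets preserving all meet ages. -/
def EquivClustered {n : ℕ} (A B : Finset (Leaf n)) : Prop :=
  ∃ σ : Leaf n → Leaf n, Set.BijOn σ ↑A ↑B ∧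
    ∀ u ∈ A, ∀ v ∈ A, meetAge (σ u) (σ v) = meetAge u v

/-- A clustering function: vanishes on `∅` and is invariant under isomorphism of the
generated subtrees. -/
def IsClusteringFn {n : ℕ} (Φ : Finset (Leaf n) → ℝ) : Prop :=
  Φ ∅ = 0 ∧ ∀ A B : Finset (Leaf n), EquivClustered A B → Φ A = Φ B

/-- A monotone clustering function. -/
def IsMonotoneClusteringFn {n : ℕ} (Φ : Finset (Leaf n) → ℝ) : Prop :=
  IsClusteringFn Φ ∧
    (∀ A B : Finset (Leaf n), MoreClustered A B → Φ A ≤ Φ B) ∧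
    (∀ A B : Finset (Leaf n), Disjoint A B → Φ (A ∪ B) ≤ Φ A + Φ B)

/-- The partition function `Z_n^{Φ,J}`. -/
def Z (n : ℕ) (Φ : Finset (Leaf n) → ℝ) (J : ℝ) : ℝ :=
  ∑ A : Finset (Leaf n), Real.exp (J * (A.card : ℝ) - Φ A)

/-- The finite-volume free energy `ζ_n^Φ(J) = 2⁻ⁿ ln Z_n^{Φ,J}`. -/
def zetaN (n : ℕ) (Φ : Finset (Leaf n) → ℝ) (J : ℝ) : ℝ :=
  Real.log (Z n Φ J) / 2 ^ n

/-- The canonical partition function `W_n^Φ(a₀)`. -/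
def W (n : ℕ) (Φ : Finset (Leaf n) → ℝ) (a₀ : ℕ) : ℝ :=
  ∑ A ∈ Finset.univ.filter (fun A : Finset (Leaf n) => A.card = a₀), Real.exp (-Φ A)

/-- The finite-volume canonical free energy `ω_n^Φ(ε) = 2⁻ⁿ ln W_n^Φ(ε 2ⁿ)` (for a
dyadic `ε ∈ [0,1]` and `n` large, `⌊ε 2ⁿ⌋ = ε 2ⁿ`). -/
def omegaN (n : ℕ) (Φ : Finset (Leaf n) → ℝ) (ε : ℝ) : ℝ :=
  Real.log (W n Φ ⌊ε * 2 ^ n⌋₊) / 2 ^ n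

/-- The expected density `ρ_n^Φ(J)` of the dry set under the PWC measure. -/
def rhoN (n : ℕ) (Φ : Finset (Leaf n) → ℝ) (J : ℝ) : ℝ :=
  (∑ A : Finset (Leaf n), (A.card : ℝ) * Real.exp (J * (A.card : ℝ) - Φ A)) /
    (2 ^ n * Z n Φ J)

/-- A dyadic rational. -/
def IsDyadic (x : ℝ) : Prop := ∃ (k : ℤ) (m : ℕ), x = (k : ℝ) / 2 ^ m

/-- The hypotheses of the general theory (Proposition 1.2): each `Φ_n` (for `n ≥ 1`) is
a monotone, non-negative clustering function, and `Φ_n(A) ≤ Φ_{n-1}(A) + γ_n` for any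
`A` contained in the leaf set of one of the two subtrees of `𝕋⁽ⁿ⁾` rooted at a child of
the root (identified with `𝕋⁽ⁿ⁻¹⁾` by prepending the corresponding letter), where
`γ_n ≥ 0` and `∑ γ_n 2⁻ⁿ < ∞`. -/
structure GoodSeq (Φ : ∀ n, Finset (Fin n → Bool) → ℝ) (γ : ℕ → ℝ) : Prop where
  mono : ∀ n, 1 ≤ n → IsMonotoneClusteringFn (Φ n)
  nonneg : ∀ n, 1 ≤ n → ∀ A, 0 ≤ Φ n A
  gamma_nonneg : ∀ n, 0 ≤ γ n
  gamma_summable : Summable fun n => γ n / 2 ^ n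
  subtree : ∀ (n : ℕ) (b : Bool) (A : Finset (Fin n → Bool)),
    Φ (n + 1) (A.image fun u => Fin.cons b u) ≤ Φ n A + γ (n + 1)

/-- The first order branching clustering function with parameters `(h_k)_{k=0}^n`, `h`. -/
def foPhi (n : ℕ) (hs : ℕ → ℝ) (h : ℝ) (A : Finset (Leaf n)) : ℝ :=
  if A = ∅ then 0 else (∑ k ∈ Finset.range (n + 1), hs k * (bcount A k : ℝ)) + h

/-- The second order branching clustering function with parameters
`(h_{k,ℓ})_{0 ≤ ℓ < k ≤ n+1}`, `h`. -/
def soPhi (n : ℕ) (H : ℕ → ℕ → ℝ) (h : ℝ) (A : Finset (Leaf n)) : ℝ :=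
  if A = ∅ then 0
  else (∑ k ∈ Finset.range (n + 2), ∑ l ∈ Finset.range k, H k l * (b2count A k l : ℝ)) + h

/-- A non-decreasing (infinite) triangular array. -/
def ArrayMono (H : ℕ → ℕ → ℝ) : Prop :=
  ∀ k k' l l' : ℕ, l < k → l' < k' → k ≤ k' → l ≤ l' → H k l ≤ H k' l'

/-- The Dirichlet energy on `𝕋⁽ⁿ⁾` of `f` (vertices encoded as words of length `≤ n`,
read from the root; a vertex of length `m` has age `n - m` and its parent edge has
conductance `C (n - m)`). -/
def energy (n : ℕ) (C : ℕ → ℝ) (f : List Bool → ℝ) : ℝ :=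
  ∑ m ∈ Finset.Icc 1 n, ∑ v : Fin m → Bool,
    C (n - m) * (f (List.ofFn v) - f (List.ofFn v).dropLast) ^ 2

/-- The capacity of a set of leaves `A ⊆ 𝕃₀⁽ⁿ⁾`. -/
def cap (n : ℕ) (C : ℕ → ℝ) (A : Finset (Leaf n)) : ℝ :=
  sInf {x : ℝ | ∃ f : List Bool → ℝ, f [] = 1 ∧ (∀ u ∈ A, f (List.ofFn u) = 0) ∧
    x = energy n C f}


-- ===== auxiliary development =====

-- chunk 1
lemma meetAge_self {n : ℕ} (u : Leaf n) : meetAge u u = 0 := if_pos rfl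

lemma meetAge_le {n : ℕ} (u v : Leaf n) : meetAge u v ≤ n := by
  unfold meetAge; split
  · exact Nat.zero_le _
  · exact Nat.sub_le _ _

lemma diff_nonempty {n : ℕ} {u v : Leaf n} (h : u ≠ v) :
    {i : ℕ | ∃ h : i < n, u ⟨i, h⟩ ≠ v ⟨i, h⟩}.Nonempty := by
  by_contra hc
  apply h
  funext i
  by_contra hne
  exact hc ⟨(i : ℕ), ⟨i.isLt, by simpa [Fin.eta] using hne⟩⟩

lemma meetAge_head_ne {n : ℕ} {u v : Leaf (n + 1)} (h : u 0 ≠ v 0) :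
    meetAge u v = n + 1 := by
  have huv : u ≠ v := fun he => h (by rw [he])
  have h0 : (0 : ℕ) ∈ {i : ℕ | ∃ h : i < n + 1, u ⟨i, h⟩ ≠ v ⟨i, h⟩} :=
    ⟨Nat.succ_pos n, h⟩
  have : sInf {i : ℕ | ∃ h : i < n + 1, u ⟨i, h⟩ ≠ v ⟨i, h⟩} = 0 :=
    Nat.eq_zero_of_le_zero (Nat.sInf_le h0)
  rw [meetAge, if_neg huv, this]
  omega

lemma tail_ne {n : ℕ} {u v : Leaf (n + 1)} (h0 : u 0 = v 0) (h : u ≠ v) :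
    Fin.tail u ≠ Fin.tail v := by
  intro he
  apply h
  have := Fin.cons_self_tail u
  rw [← Fin.cons_self_tail u, ← Fin.cons_self_tail v, h0, he]

lemma meetAge_head_eq {n : ℕ} {u v : Leaf (n + 1)} (h0 : u 0 = v 0) :
    meetAge u v = meetAge (Fin.tail u) (Fin.tail v) := by
  by_cases huv : u = v
  · rw [huv, meetAge_self, meetAge_self]
  · have htne := tail_ne h0 huv
    set S : Set ℕ := {i : ℕ | ∃ h : i < n + 1, u ⟨i, h⟩ ≠ v ⟨i, h⟩} with hS
    set T : Set ℕ := {i : ℕ | ∃ h : i < n, Fin.tail u ⟨i, h⟩ ≠ Fin.tail v ⟨i, h⟩} with hT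
    have hmemT : ∀ j, j ∈ T ↔ j + 1 ∈ S := by
      intro j
      constructor
      · rintro ⟨hj, hne⟩
        exact ⟨Nat.succ_lt_succ hj, hne⟩
      · rintro ⟨hj, hne⟩
        exact ⟨Nat.lt_of_succ_lt_succ hj, hne⟩
    have hSne : S.Nonempty := diff_nonempty huv
    have hTne : T.Nonempty := diff_nonempty htne
    have h0S : (0 : ℕ) ∉ S := by
      rintro ⟨h01, hne⟩
      exact hne (by simpa using h0)
    have hinf : sInf S = sInf T + 1 := by
      have h1 : sInf S ≤ sInf T + 1 := Nat.sInf_le ((hmemT _).1 (Nat.sInf_mem hTne))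
      have h2 : sInf S ≠ 0 := fun hz => h0S (hz ▸ Nat.sInf_mem hSne)
      obtain ⟨j, hj⟩ : ∃ j, sInf S = j + 1 := ⟨sInf S - 1, (Nat.succ_pred_eq_of_pos (Nat.pos_of_ne_zero h2)).symm⟩
      have : j ∈ T := (hmemT j).2 (hj ▸ Nat.sInf_mem hSne)
      have h3 : sInf T ≤ j := Nat.sInf_le this
      omega
    rw [meetAge, if_neg huv, meetAge, if_neg htne, ← hS, ← hT, hinf]
    omega

lemma meetAge_cons {n : ℕ} (b : Bool) (u v : Leaf n) :
    meetAge (Fin.cons b u) (Fin.cons b v) = meetAge u v := by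
  rw [meetAge_head_eq (by simp), Fin.tail_cons, Fin.tail_cons]

lemma meetAge_head_eq_le {n : ℕ} {u v : Leaf (n + 1)} (h0 : u 0 = v 0) :
    meetAge u v ≤ n := by
  rw [meetAge_head_eq h0]; exact meetAge_le _ _

lemma head_ne_of_meetAge {n : ℕ} {u v : Leaf (n + 1)} (h : meetAge u v = n + 1) :
    u 0 ≠ v 0 := by
  intro h0
  have := meetAge_head_eq_le h0
  omega

-- trunc lemmas
lemma trunc_cons {n : ℕ} {k : ℕ} (hk : k ≤ n) (b : Bool) (u : Leaf n) :
    trunc k (Fin.cons b u : Leaf (n + 1)) = Fin.cons b (trunc k u) := by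
  funext i
  refine Fin.cases ?_ ?_ i
  · have h0 : (((0 : Fin (n+1)) : ℕ)) < n + 1 - k := by simp; omega
    simp only [trunc, h0, if_pos, Fin.cons_zero]
  · intro j
    have hc : ((j.succ : Fin (n+1)) : ℕ) < n + 1 - k ↔ (j : ℕ) < n - k := by
      simp; omega
    simp only [trunc, Fin.cons_succ]
    by_cases hj : (j : ℕ) < n - k
    · rw [if_pos (hc.2 hj), if_pos hj]
    · rw [if_neg (fun hh => hj (hc.1 hh)), if_neg hj]

lemma trunc_top {n : ℕ} (w : Leaf (n + 1)) :
    trunc (n + 1) w = fun _ => false := by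
  funext i
  simp [trunc]

/-- tails of the side-`b` part of `A`. -/
def tls {n : ℕ} (b : Bool) (A : Finset (Leaf (n + 1))) : Finset (Leaf n) :=
  (A.filter (fun u => u 0 = b)).image Fin.tail

lemma mem_tls {n : ℕ} {b : Bool} {A : Finset (Leaf (n + 1))} {x : Leaf n} :
    x ∈ tls b A ↔ Fin.cons b x ∈ A := by
  constructor
  · rintro hx
    obtain ⟨u, hu, rfl⟩ := Finset.mem_image.1 hx
    obtain ⟨huA, hub⟩ := Finset.mem_filter.1 hu
    rw [← hub, Fin.cons_self_tail]
    exact huA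
  · intro hx
    exact Finset.mem_image.2 ⟨Fin.cons b x, Finset.mem_filter.2 ⟨hx, Fin.cons_zero _ _⟩,
      Fin.tail_cons _ _⟩

lemma tls_union {n : ℕ} (b : Bool) (A B : Finset (Leaf (n + 1))) :
    tls b (A ∪ B) = tls b A ∪ tls b B := by
  ext x; simp [mem_tls, Finset.mem_union]

lemma tls_disjoint {n : ℕ} (b : Bool) {A B : Finset (Leaf (n + 1))} (h : Disjoint A B) :
    Disjoint (tls b A) (tls b B) := by
  rw [Finset.disjoint_left] at h ⊢
  intro x hx hx'
  exact h (mem_tls.1 hx) (mem_tls.1 hx')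

lemma mem_side {n : ℕ} {A : Finset (Leaf (n + 1))} {u : Leaf (n + 1)} (hu : u ∈ A) :
    Fin.tail u ∈ tls (u 0) A := by
  rw [mem_tls, Fin.cons_self_tail]; exact hu

lemma tls_nonempty_of {n : ℕ} {A : Finset (Leaf (n + 1))} {u : Leaf (n + 1)} (hu : u ∈ A)
    {b : Bool} (hb : u 0 = b) : (tls b A).Nonempty :=
  ⟨Fin.tail u, by rw [mem_tls, ← hb, Fin.cons_self_tail]; exact hu⟩

lemma mem_branchPts {n : ℕ} {A : Finset (Leaf n)} {k : ℕ} {w : Leaf n} :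
    w ∈ branchPts A k ↔ ∃ u ∈ A, ∃ v ∈ A, meetAge u v = k ∧ trunc k u = w := by
  simp only [branchPts, Finset.mem_image, Finset.mem_filter, Finset.mem_product]
  constructor
  · rintro ⟨⟨u, v⟩, ⟨⟨hu, hv⟩, hm⟩, rfl⟩
    exact ⟨u, hu, v, hv, hm, rfl⟩
  · rintro ⟨u, hu, v, hv, hm, rfl⟩
    exact ⟨(u, v), ⟨⟨hu, hv⟩, hm⟩, rfl⟩

lemma branchPts_empty {n : ℕ} (k : ℕ) : branchPts (∅ : Finset (Leaf n)) k = ∅ := by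
  ext w; simp [mem_branchPts]

/-- transfer of branching points between a tree and its subtrees, for ages `≤ n`. -/
lemma mem_branchPts_cons {n : ℕ} {A : Finset (Leaf (n + 1))} {k : ℕ} (hk : k ≤ n)
    (b : Bool) (x : Leaf n) :
    Fin.cons b x ∈ branchPts A k ↔ x ∈ branchPts (tls b A) k := by
  constructor
  · rw [mem_branchPts, mem_branchPts]
    rintro ⟨u, hu, v, hv, hm, ht⟩
    have h0 : u 0 = v 0 := by
      by_contra hne
      have := meetAge_head_ne hne
      omega
    have hub : u 0 = b := by
      have h1 : trunc k u = Fin.cons (u 0) (trunc k (Fin.tail u)) := by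
        conv_lhs => rw [← Fin.cons_self_tail u]
        rw [trunc_cons hk]
      rw [h1] at ht
      have := congrFun ht 0
      simpa using this
    refine ⟨Fin.tail u, ?_, Fin.tail v, ?_, ?_, ?_⟩
    · rw [mem_tls, ← hub, Fin.cons_self_tail]; exact hu
    · have hvb : v 0 = b := h0.symm.trans hub
      rw [mem_tls, ← hvb, Fin.cons_self_tail]; exact hv
    · rw [← meetAge_head_eq h0]; exact hm
    · have h1 : trunc k u = Fin.cons b (trunc k (Fin.tail u)) := by
        conv_lhs => rw [← Fin.cons_self_tail u]
        rw [trunc_cons hk, hub]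
      rw [h1] at ht
      have := congrArg Fin.tail ht
      simpa [Fin.tail_cons] using this
  · rw [mem_branchPts, mem_branchPts]
    rintro ⟨u, hu, v, hv, hm, rfl⟩
    refine ⟨Fin.cons b u, mem_tls.1 hu, Fin.cons b v, mem_tls.1 hv, ?_, ?_⟩
    · rw [meetAge_cons]; exact hm
    · rw [trunc_cons hk]

lemma branchPts_eq_union {n : ℕ} (A : Finset (Leaf (n + 1))) {k : ℕ} (hk : k ≤ n) :
    branchPts A k =
      (branchPts (tls false A) k).image (Fin.cons false) ∪
      (branchPts (tls true A) k).image (Fin.cons true) := by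
  ext w
  constructor
  · intro hw
    have hw' : Fin.cons (w 0) (Fin.tail w) ∈ branchPts A k := by
      rw [Fin.cons_self_tail]; exact hw
    rw [mem_branchPts_cons hk] at hw'
    rcases Bool.eq_false_or_eq_true (w 0) with h0 | h0
    · apply Finset.mem_union_right
      refine Finset.mem_image.2 ⟨Fin.tail w, ?_, ?_⟩
      · rw [← h0]; exact hw'
      · conv_rhs => rw [← Fin.cons_self_tail w]
        rw [h0]
    · apply Finset.mem_union_left
      refine Finset.mem_image.2 ⟨Fin.tail w, ?_, ?_⟩
      · rw [← h0]; exact hw'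
      · conv_rhs => rw [← Fin.cons_self_tail w]
        rw [h0]
  · intro hw
    rcases Finset.mem_union.1 hw with hw' | hw' <;>
    · obtain ⟨x, hx, rfl⟩ := Finset.mem_image.1 hw'
      exact (mem_branchPts_cons hk _ _).2 hx

lemma branchPts_top_mem {n : ℕ} {A : Finset (Leaf (n + 1))}
    (e0 : (tls false A).Nonempty) (e1 : (tls true A).Nonempty) :
    (fun _ => false : Leaf (n + 1)) ∈ branchPts A (n + 1) := by
  obtain ⟨x, hx⟩ := e0
  obtain ⟨y, hy⟩ := e1
  rw [mem_branchPts]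
  refine ⟨Fin.cons false x, mem_tls.1 hx, Fin.cons true y, mem_tls.1 hy, ?_, trunc_top _⟩
  exact meetAge_head_ne (by simp)

lemma branchPts_top_eq {n : ℕ} {A : Finset (Leaf (n + 1))}
    (e0 : (tls false A).Nonempty) (e1 : (tls true A).Nonempty) :
    branchPts A (n + 1) = {fun _ => false} := by
  apply Finset.Subset.antisymm
  · intro w hw
    rw [mem_branchPts] at hw
    obtain ⟨u, _, v, _, _, rfl⟩ := hw
    rw [trunc_top]
    exact Finset.mem_singleton_self _
  · intro w hw
    rw [Finset.mem_singleton] at hw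
    rw [hw]
    exact branchPts_top_mem e0 e1

lemma branchPts_top_empty {n : ℕ} {A : Finset (Leaf (n + 1))} {b : Bool}
    (hb : ∀ u ∈ A, u 0 = b) :
    branchPts A (n + 1) = ∅ := by
  ext w
  simp only [mem_branchPts, Finset.notMem_empty, iff_false]
  rintro ⟨u, hu, v, hv, hm, _⟩
  exact head_ne_of_meetAge hm (by rw [hb u hu, hb v hv])

lemma b2count_empty {n : ℕ} (k l : ℕ) : b2count (∅ : Finset (Leaf n)) k l = 0 := by
  unfold b2count
  split <;> simp [branchPts_empty]

lemma tls_empty_of_side {n : ℕ} {A : Finset (Leaf (n + 1))} {b : Bool}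
    (hb : ∀ u ∈ A, u 0 = b) {c : Bool} (hc : c ≠ b) : tls c A = ∅ := by
  ext x
  simp only [mem_tls, Finset.notMem_empty, iff_false]
  intro hx
  exact hc (by simpa using hb _ hx)

lemma disjoint_cons_images {n : ℕ} (s t : Finset (Leaf n)) :
    Disjoint (s.image (Fin.cons false) : Finset (Leaf (n + 1)))
      (t.image (Fin.cons true)) := by
  rw [Finset.disjoint_left]
  rintro y hy hy'
  obtain ⟨x, _, rfl⟩ := Finset.mem_image.1 hy
  obtain ⟨x', _, he⟩ := Finset.mem_image.1 hy'
  have := congrFun he 0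
  simp at this

lemma card_filter_bp {n : ℕ} (A : Finset (Leaf (n + 1))) {l : ℕ} (hl : l ≤ n)
    (P : Leaf (n + 1) → Prop) [DecidablePred P] (P' : Bool → Leaf n → Prop)
    [∀ b, DecidablePred (P' b)]
    (hP : ∀ b x, x ∈ branchPts (tls b A) l → (P (Fin.cons b x) ↔ P' b x)) :
    ((branchPts A l).filter P).card
      = ((branchPts (tls false A) l).filter (P' false)).card
        + ((branchPts (tls true A) l).filter (P' true)).card := by
  rw [branchPts_eq_union A hl, Finset.filter_union,
    Finset.card_union_of_disjoint
      (Finset.disjoint_filter_filter (disjoint_cons_images _ _))]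
  congr 1
  · rw [Finset.filter_image,
      Finset.filter_congr (fun x hx => hP false x hx)]
    exact Finset.card_image_of_injective _ (Fin.cons_right_injective _)
  · rw [Finset.filter_image,
      Finset.filter_congr (fun x hx => hP true x hx)]
    exact Finset.card_image_of_injective _ (Fin.cons_right_injective _)

lemma branchPts_eq_side {n : ℕ} {A : Finset (Leaf (n + 1))} {b : Bool}
    (hb : ∀ u ∈ A, u 0 = b) {l : ℕ} (hl : l ≤ n) :
    branchPts A l = (branchPts (tls b A) l).image (Fin.cons b) := by
  rw [branchPts_eq_union A hl]
  cases b
  · have h1 : tls true A = ∅ := tls_empty_of_side hb (by simp)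
    rw [h1, branchPts_empty]
    simp
  · have h1 : tls false A = ∅ := tls_empty_of_side hb (by simp)
    rw [h1, branchPts_empty]
    simp

lemma card_filter_bp_side {n : ℕ} {A : Finset (Leaf (n + 1))} {b : Bool}
    (hb : ∀ u ∈ A, u 0 = b) {l : ℕ} (hl : l ≤ n)
    (P : Leaf (n + 1) → Prop) [DecidablePred P] (P'' : Leaf n → Prop)
    [DecidablePred P'']
    (hP : ∀ x, x ∈ branchPts (tls b A) l → (P (Fin.cons b x) ↔ P'' x)) :
    ((branchPts A l).filter P).card = ((branchPts (tls b A) l).filter P'').card := by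
  rw [branchPts_eq_side hb hl, Finset.filter_image,
    Finset.filter_congr (fun x hx => hP x hx)]
  exact Finset.card_image_of_injective _ (Fin.cons_right_injective _)

lemma transfer_notmem {n : ℕ} {A : Finset (Leaf (n + 1))} {b : Bool} {x : Leaf n}
    (j : ℕ) (hj : j ≤ n) :
    (trunc j (Fin.cons b x) ∉ branchPts A j) ↔ (trunc j x ∉ branchPts (tls b A) j) := by
  rw [trunc_cons hj, mem_branchPts_cons hj]

/-- both-sides split of `b2count` for `k ≤ n`. -/
lemma b2count_lowrow {n : ℕ} (A : Finset (Leaf (n + 1))) {k l : ℕ} (hk : k ≤ n) (hl : l < k) :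
    b2count A k l = b2count (tls false A) k l + b2count (tls true A) k l := by
  have hkk : k ≠ n + 1 + 1 := by omega
  have hkk' : k ≠ n + 1 := by omega
  rw [b2count, if_neg hkk, b2count, if_neg hkk', b2count, if_neg hkk']
  refine card_filter_bp A (show l ≤ n by omega) _
    (fun b x => trunc k x ∈ branchPts (tls b A) k ∧
      ∀ j, l < j → j < k → trunc j x ∉ branchPts (tls b A) j) (fun b x _ => ?_)
  constructor
  · rintro ⟨h1, h2⟩
    rw [trunc_cons hk, mem_branchPts_cons hk] at h1
    exact ⟨h1, fun j hj1 hj2 => (transfer_notmem j (by omega)).1 (h2 j hj1 hj2)⟩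
  · rintro ⟨h1, h2⟩
    rw [trunc_cons hk, mem_branchPts_cons hk]
    exact ⟨h1, fun j hj1 hj2 => (transfer_notmem (A := A) j (by omega)).2 (h2 j hj1 hj2)⟩

/-- both-sides split of `b2count` for `k = n + 1` when `A` meets both sides. -/
lemma b2count_toprow {n : ℕ} (A : Finset (Leaf (n + 1)))
    (e0 : (tls false A).Nonempty) (e1 : (tls true A).Nonempty) {l : ℕ} (hl : l ≤ n) :
    b2count A (n + 1) l
      = b2count (tls false A) (n + 1) l + b2count (tls true A) (n + 1) l := by
  have hkk : n + 1 ≠ n + 1 + 1 := by omega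
  rw [b2count, if_neg hkk, b2count, if_pos rfl, b2count, if_pos rfl]
  refine card_filter_bp A hl _
    (fun b x => ∀ j, l < j → j ≤ n → trunc j x ∉ branchPts (tls b A) j) (fun b x _ => ?_)
  constructor
  · rintro ⟨_, h2⟩
    exact fun j hj1 hj2 => (transfer_notmem j hj2).1 (h2 j hj1 (by omega))
  · intro h2
    constructor
    · rw [trunc_top]
      exact branchPts_top_mem e0 e1
    · exact fun j hj1 hj2 => (transfer_notmem (A := A) j (by omega)).2 (h2 j hj1 (by omega))

/-- `k = n+2` row: only the root indicator survives, when `A` meets both sides. -/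
lemma b2count_root_top {n : ℕ} (A : Finset (Leaf (n + 1)))
    (e0 : (tls false A).Nonempty) (e1 : (tls true A).Nonempty) :
    b2count A (n + 1 + 1) (n + 1) = 1 := by
  rw [b2count, if_pos rfl, branchPts_top_eq e0 e1]
  rw [Finset.filter_true_of_mem (fun w _ => by omega)]
  exact Finset.card_singleton _

lemma b2count_root_low {n : ℕ} (A : Finset (Leaf (n + 1)))
    (e0 : (tls false A).Nonempty) (e1 : (tls true A).Nonempty) {l : ℕ} (hl : l ≤ n) :
    b2count A (n + 1 + 1) l = 0 := by
  rw [b2count, if_pos rfl, Finset.card_eq_zero, Finset.filter_eq_empty_iff]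
  intro w _
  intro hc
  exact (hc (n + 1) (by omega) (by omega)) (by rw [trunc_top]; exact branchPts_top_mem e0 e1)

/-- single-side lemmas -/
lemma b2count_side_low {n : ℕ} {A : Finset (Leaf (n + 1))} {b : Bool}
    (hb : ∀ u ∈ A, u 0 = b) {k l : ℕ} (hk : k ≤ n) (hl : l < k) :
    b2count A k l = b2count (tls b A) k l := by
  have hkk : k ≠ n + 1 + 1 := by omega
  have hkk' : k ≠ n + 1 := by omega
  rw [b2count, if_neg hkk, b2count, if_neg hkk']
  refine card_filter_bp_side hb (show l ≤ n by omega) _ _ (fun x _ => ?_)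
  constructor
  · rintro ⟨h1, h2⟩
    rw [trunc_cons hk, mem_branchPts_cons hk] at h1
    exact ⟨h1, fun j hj1 hj2 => (transfer_notmem j (by omega)).1 (h2 j hj1 hj2)⟩
  · rintro ⟨h1, h2⟩
    rw [trunc_cons hk, mem_branchPts_cons hk]
    exact ⟨h1, fun j hj1 hj2 => (transfer_notmem (A := A) j (by omega)).2 (h2 j hj1 hj2)⟩

lemma b2count_side_mid {n : ℕ} {A : Finset (Leaf (n + 1))} {b : Bool}
    (hb : ∀ u ∈ A, u 0 = b) (l : ℕ) :
    b2count A (n + 1) l = 0 := by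
  have hkk : n + 1 ≠ n + 1 + 1 := by omega
  rw [b2count, if_neg hkk, Finset.card_eq_zero, Finset.filter_eq_empty_iff]
  intro w _ hc
  rw [branchPts_top_empty hb] at hc
  exact Finset.notMem_empty _ hc.1

lemma b2count_side_top {n : ℕ} {A : Finset (Leaf (n + 1))} {b : Bool}
    (hb : ∀ u ∈ A, u 0 = b) {l : ℕ} (hl : l ≤ n) :
    b2count A (n + 1 + 1) l = b2count (tls b A) (n + 1) l := by
  rw [b2count, if_pos rfl, b2count, if_pos rfl]
  refine card_filter_bp_side hb hl _ _ (fun x _ => ?_)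
  constructor
  · intro h2
    exact fun j hj1 hj2 => (transfer_notmem j hj2).1 (h2 j hj1 (by omega))
  · intro h2 j hj1 hj2
    rcases Nat.lt_or_ge j (n + 1) with hj | hj
    · exact (transfer_notmem (A := A) j (by omega)).2 (h2 j hj1 (by omega))
    · have hje : j = n + 1 := by omega
      subst hje
      rw [branchPts_top_empty hb]
      exact Finset.notMem_empty _

lemma b2count_side_roottop {n : ℕ} {A : Finset (Leaf (n + 1))} {b : Bool}
    (hb : ∀ u ∈ A, u 0 = b) :
    b2count A (n + 1 + 1) (n + 1) = 0 := by
  rw [b2count, if_pos rfl, branchPts_top_empty hb]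
  simp

lemma tls_ne_empty {n : ℕ} {A : Finset (Leaf (n + 1))} {b : Bool}
    (h : (tls b A).Nonempty) : A ≠ ∅ := by
  obtain ⟨x, hx⟩ := h
  rw [mem_tls] at hx
  exact Finset.ne_empty_of_mem hx

lemma soPhi_congr {n : ℕ} {G G' : ℕ → ℕ → ℝ}
    (hG : ∀ k l, l < k → k ≤ n + 1 → G k l = G' k l) (h : ℝ) (A : Finset (Leaf n)) :
    soPhi n G h A = soPhi n G' h A := by
  unfold soPhi
  split
  · rfl
  · congr 1
    refine Finset.sum_congr rfl (fun k hk => Finset.sum_congr rfl (fun l hl => ?_))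
    rw [hG k l (Finset.mem_range.1 hl) (by have := Finset.mem_range.1 hk; omega)]

lemma soPhi_le_arr {n : ℕ} {G G' : ℕ → ℕ → ℝ}
    (hG : ∀ k l, l < k → k ≤ n + 1 → G k l ≤ G' k l) (h : ℝ) (A : Finset (Leaf n)) :
    soPhi n G h A ≤ soPhi n G' h A := by
  unfold soPhi
  split
  · exact le_refl _
  · apply add_le_add_left
    refine Finset.sum_le_sum (fun k hk => Finset.sum_le_sum (fun l hl => ?_))
    exact mul_le_mul_of_nonneg_right
      (hG k l (Finset.mem_range.1 hl) (by have := Finset.mem_range.1 hk; omega))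
      (Nat.cast_nonneg _)

lemma soPhi_shift {n : ℕ} (G : ℕ → ℕ → ℝ) (h : ℝ) {A : Finset (Leaf n)} (hA : A ≠ ∅) :
    soPhi n G h A = soPhi n G 0 A + h := by
  unfold soPhi
  rw [if_neg hA, if_neg hA]
  ring

def dW (m : ℕ) (G : ℕ → ℕ → ℝ) : ℕ → ℕ → ℝ :=
  fun k l => if k = m + 1 then G (m + 2) l else G k l

/-- Recursion, single-side case. -/
lemma soPhi_side {n : ℕ} {A : Finset (Leaf (n + 1))} {b : Bool}
    (hb : ∀ u ∈ A, u 0 = b) (hA : (tls b A).Nonempty) (G : ℕ → ℕ → ℝ) (h : ℝ) :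
    soPhi (n + 1) G h A = soPhi n (dW n G) h (tls b A) := by
  unfold dW
  have hA' : A ≠ ∅ := tls_ne_empty hA
  have hB' : tls b A ≠ ∅ := Finset.nonempty_iff_ne_empty.1 hA
  rw [soPhi, if_neg hA', soPhi, if_neg hB']
  congr 1
  have split3 : ∀ f : ℕ → ℝ, ∑ k ∈ Finset.range (n + 1 + 2), f k
      = (∑ k ∈ Finset.range (n + 1), f k) + f (n + 1) + f (n + 2) := by
    intro f; rw [Finset.sum_range_succ, Finset.sum_range_succ]
  have split2 : ∀ f : ℕ → ℝ, ∑ k ∈ Finset.range (n + 2), f k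
      = (∑ k ∈ Finset.range (n + 1), f k) + f (n + 1) := by
    intro f; rw [Finset.sum_range_succ]
  rw [split3]
  conv_rhs => rw [split2]
  have hTn1 : ∑ l ∈ Finset.range (n + 1), G (n + 1) l * (b2count A (n + 1) l : ℝ) = 0 := by
    refine Finset.sum_eq_zero (fun l hl => ?_)
    rw [b2count_side_mid hb]
    simp
  have hTn2 : ∑ l ∈ Finset.range (n + 2), G (n + 2) l * (b2count A (n + 2) l : ℝ)
      = ∑ l ∈ Finset.range (n + 1),
          (if n + 1 = n + 1 then G (n + 2) l else G (n + 1) l)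
            * (b2count (tls b A) (n + 1) l : ℝ) := by
    rw [Finset.sum_range_succ]
    have : b2count A (n + 2) (n + 1) = 0 := b2count_side_roottop hb
    rw [this]
    simp only [Nat.cast_zero, mul_zero, add_zero, if_pos rfl]
    refine Finset.sum_congr rfl (fun l hl => ?_)
    have : b2count A (n + 2) l = b2count (tls b A) (n + 1) l :=
      b2count_side_top hb (by have := Finset.mem_range.1 hl; omega)
    rw [this]
    simp
  have hSn : ∀ k ∈ Finset.range (n + 1),
      (∑ l ∈ Finset.range k, G k l * (b2count A k l : ℝ))
      = ∑ l ∈ Finset.range k,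
          (if k = n + 1 then G (n + 2) l else G k l) * (b2count (tls b A) k l : ℝ) := by
    intro k hk
    have hk' : k ≤ n := by have := Finset.mem_range.1 hk; omega
    refine Finset.sum_congr rfl (fun l hl => ?_)
    rw [b2count_side_low hb hk' (Finset.mem_range.1 hl), if_neg (by omega)]
  rw [Finset.sum_congr rfl hSn, hTn1, hTn2]
  ring

/-- Recursion, splitting case. -/
lemma soPhi_split {n : ℕ} {A : Finset (Leaf (n + 1))}
    (e0 : (tls false A).Nonempty) (e1 : (tls true A).Nonempty) (G : ℕ → ℕ → ℝ) (h : ℝ) :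
    soPhi (n + 1) G h A
      = G (n + 2) (n + 1) + h + soPhi n G 0 (tls false A) + soPhi n G 0 (tls true A) := by
  have hA' : A ≠ ∅ := tls_ne_empty e0
  rw [soPhi, if_neg hA', soPhi, if_neg (Finset.nonempty_iff_ne_empty.1 e0),
    soPhi, if_neg (Finset.nonempty_iff_ne_empty.1 e1)]
  have split3 : ∀ f : ℕ → ℝ, ∑ k ∈ Finset.range (n + 1 + 2), f k
      = (∑ k ∈ Finset.range (n + 2), f k) + f (n + 2) := by
    intro f; rw [Finset.sum_range_succ]
  rw [split3]
  have hTn2 : ∑ l ∈ Finset.range (n + 2), G (n + 2) l * (b2count A (n + 2) l : ℝ)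
      = G (n + 2) (n + 1) := by
    rw [Finset.sum_range_succ]
    have h1 : b2count A (n + 2) (n + 1) = 1 := b2count_root_top A e0 e1
    rw [h1, Finset.sum_eq_zero (fun l hl => by
      have : b2count A (n + 2) l = 0 :=
        b2count_root_low A e0 e1 (by have := Finset.mem_range.1 hl; omega)
      rw [this]
      simp)]
    norm_num
  have hSn : ∀ k ∈ Finset.range (n + 2),
      (∑ l ∈ Finset.range k, G k l * (b2count A k l : ℝ))
      = (∑ l ∈ Finset.range k, G k l * (b2count (tls false A) k l : ℝ))
        + ∑ l ∈ Finset.range k, G k l * (b2count (tls true A) k l : ℝ) := by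
    intro k hk
    rw [← Finset.sum_add_distrib]
    refine Finset.sum_congr rfl (fun l hl => ?_)
    have hl' := Finset.mem_range.1 hl
    rcases Nat.lt_or_ge k (n + 1) with hkn | hkn
    · rw [b2count_lowrow A (by omega) hl']
      push_cast
      ring
    · have hke : k = n + 1 := by have := Finset.mem_range.1 hk; omega
      subst hke
      rw [b2count_toprow A e0 e1 (by omega)]
      push_cast
      ring
  rw [Finset.sum_congr rfl hSn, hTn2, Finset.sum_add_distrib]
  ring

def MonoArr (m : ℕ) (G : ℕ → ℕ → ℝ) : Prop :=
  ∀ k k' l l' : ℕ, l < k → l' < k' → k ≤ k' → k' ≤ m + 1 → l ≤ l' → G k l ≤ G k' l'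

lemma monoArr_mono {m : ℕ} {G : ℕ → ℕ → ℝ} (h : MonoArr (m + 1) G) : MonoArr m G :=
  fun k k' l l' h1 h2 h3 h4 h5 => h k k' l l' h1 h2 h3 (by omega) h5

lemma monoArr_dW {m : ℕ} {G : ℕ → ℕ → ℝ} (h : MonoArr (m + 1) G) : MonoArr m (dW m G) := by
  intro k k' l l' h1 h2 h3 h4 h5
  unfold dW
  by_cases hk' : k' = m + 1
  · rw [if_pos hk']
    by_cases hk : k = m + 1
    · rw [if_pos hk]
      exact h (m + 2) (m + 2) l l' (by omega) (by omega) (le_refl _) (by omega) h5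
    · rw [if_neg hk]
      exact h k (m + 2) l l' h1 (by omega) (by omega) (by omega) h5
  · rw [if_neg hk', if_neg (show k ≠ m + 1 by omega)]
    exact h k k' l l' h1 h2 h3 (by omega) h5

lemma side_cases {m : ℕ} {E : Finset (Leaf (m + 1))} (hE : E.Nonempty) :
    (∃ b, (∀ u ∈ E, u 0 = b) ∧ (tls b E).Nonempty)
      ∨ ((tls false E).Nonempty ∧ (tls true E).Nonempty) := by
  by_cases h0 : ∃ u ∈ E, u 0 = false
  · by_cases h1 : ∃ u ∈ E, u 0 = true
    · obtain ⟨u, hu, hub⟩ := h0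
      obtain ⟨v, hv, hvb⟩ := h1
      exact Or.inr ⟨tls_nonempty_of hu hub, tls_nonempty_of hv hvb⟩
    · obtain ⟨u, hu, hub⟩ := h0
      refine Or.inl ⟨false, fun v hv => ?_, tls_nonempty_of hu hub⟩
      cases hv0 : v 0
      · rfl
      · exact absurd ⟨v, hv, hv0⟩ h1
  · obtain ⟨u, hu⟩ := hE
    have hub : u 0 = true := by
      cases hu0 : u 0
      · exact absurd ⟨u, hu, hu0⟩ h0
      · rfl
    refine Or.inl ⟨true, fun v hv => ?_, tls_nonempty_of hu hub⟩
    cases hv0 : v 0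
    · exact absurd ⟨v, hv, hv0⟩ h0
    · rfl

lemma tls_nonempty_union_left {m : ℕ} {E F : Finset (Leaf (m + 1))} {b : Bool}
    (h : (tls b E).Nonempty) : (tls b (E ∪ F)).Nonempty := by
  obtain ⟨x, hx⟩ := h
  exact ⟨x, by rw [mem_tls] at hx ⊢; exact Finset.mem_union_left _ hx⟩

lemma tls_nonempty_union_right {m : ℕ} {E F : Finset (Leaf (m + 1))} {b : Bool}
    (h : (tls b F).Nonempty) : (tls b (E ∪ F)).Nonempty := by
  obtain ⟨x, hx⟩ := h
  exact ⟨x, by rw [mem_tls] at hx ⊢; exact Finset.mem_union_right _ hx⟩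

/-- The key lemma: a sharp subadditivity statement for a pair of triangular arrays. -/
theorem lift_lemma : ∀ (m : ℕ) (V W : ℕ → ℕ → ℝ) (eb : ℝ), MonoArr m V → MonoArr m W →
    (∀ k l, l < k → k ≤ m → V k l = W k l) →
    (∀ l, l ≤ m → V (m + 1) l ≤ W (m + 1) l) →
    (∀ l, l ≤ m → W (m + 1) l ≤ eb) →
    ∀ E F : Finset (Leaf m), Disjoint E F → E.Nonempty → F.Nonempty →
      soPhi m W 0 (E ∪ F) ≤ eb + soPhi m V 0 E + soPhi m V 0 F := by
  intro m
  induction m with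
  | zero =>
    intro V W eb _ _ _ _ _ E F hD hE hF
    exfalso
    obtain ⟨e, he⟩ := hE
    obtain ⟨f, hf⟩ := hF
    have hef : e = f := funext (fun i => Fin.elim0 i)
    exact Finset.disjoint_left.1 hD he (hef ▸ hf)
  | succ m ih =>
    intro V W eb hV hW heq hle htop E F hD hE hF
    -- common facts
    have hVm : MonoArr m V := monoArr_mono hV
    have hWm : MonoArr m W := monoArr_mono hW
    have hVd : MonoArr m (dW m V) := monoArr_dW hV
    have hWd : MonoArr m (dW m W) := monoArr_dW hW
    have hWV : ∀ X : Finset (Leaf m), soPhi m W 0 X = soPhi m V 0 X :=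
      fun X => soPhi_congr (fun k l h1 h2 => (heq k l h1 h2).symm) 0 X
    have hVdW : ∀ X : Finset (Leaf m), soPhi m V 0 X ≤ soPhi m (dW m V) 0 X := by
      intro X
      refine soPhi_le_arr (fun k l h1 h2 => ?_) 0 X
      unfold dW
      by_cases hk : k = m + 1
      · rw [if_pos hk]
        subst hk
        exact hV (m + 1) (m + 2) l l h1 (by omega) (by omega) (by omega) (le_refl _)
      · rw [if_neg hk]
    have hWdV : ∀ X : Finset (Leaf m), soPhi m W 0 X ≤ soPhi m (dW m V) 0 X :=
      fun X => (hWV X).le.trans (hVdW X)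
    have subIH : ∀ X Y : Finset (Leaf m), Disjoint X Y → X.Nonempty → Y.Nonempty →
        soPhi m W 0 (X ∪ Y) ≤ W (m + 1) m + soPhi m W 0 X + soPhi m W 0 Y := by
      intro X Y h1 h2 h3
      exact ih W W (W (m + 1) m) hWm hWm (fun _ _ _ _ => rfl) (fun l _ => le_refl _)
        (fun l hl => hW (m + 1) (m + 1) l m (by omega) (by omega) (le_refl _) (by omega) hl)
        X Y h1 h2 h3
    have hVtop : V (m + 1) m ≤ V (m + 2) (m + 1) :=
      hV (m + 1) (m + 2) m (m + 1) (by omega) (by omega) (by omega) (by omega) (by omega)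
    have heqVW : V (m + 1) m = W (m + 1) m := heq (m + 1) m (by omega) (by omega)
    have htopW : W (m + 2) (m + 1) ≤ eb := htop (m + 1) (by omega)
    -- disjointness of parts
    have hDt : ∀ b : Bool, Disjoint (tls b E) (tls b F) := fun b => tls_disjoint b hD
    rcases side_cases hE with ⟨b, hEb, hEbne⟩ | ⟨hE0, hE1⟩
    · rcases side_cases hF with ⟨c, hFc, hFcne⟩ | ⟨hF0, hF1⟩
      · by_cases hbc : b = c
        · -- both on side b
          subst hbc
          have hCb : ∀ u ∈ E ∪ F, u 0 = b := fun u hu => by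
            rcases Finset.mem_union.1 hu with h | h
            · exact hEb u h
            · exact hFc u h
          have hCne : (tls b (E ∪ F)).Nonempty := tls_nonempty_union_left hEbne
          rw [soPhi_side hCb hCne W 0, soPhi_side hEb hEbne V 0, soPhi_side hFc hFcne V 0]
          have : tls b (E ∪ F) = tls b E ∪ tls b F := tls_union b E F
          rw [this]
          refine ih (dW m V) (dW m W) eb hVd hWd ?_ ?_ ?_ _ _ (hDt b) hEbne hFcne
          · intro k l h1 h2
            unfold dW
            rw [if_neg (by omega), if_neg (by omega)]
            exact heq k l h1 (by omega)
          · intro l hl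
            unfold dW
            rw [if_pos rfl, if_pos rfl]
            exact hle l (by omega)
          · intro l hl
            unfold dW
            rw [if_pos rfl]
            exact htop l (by omega)
        · -- E on side b, F on side ¬b : the union splits
          have hCne0 : (tls false (E ∪ F)).Nonempty := by
            cases b
            · exact tls_nonempty_union_left hEbne
            · cases c
              · exact tls_nonempty_union_right hFcne
              · exact absurd rfl hbc
          have hCne1 : (tls true (E ∪ F)).Nonempty := by
            cases b
            · cases c
              · exact absurd rfl hbc
              · exact tls_nonempty_union_right hFcne
            · exact tls_nonempty_union_left hEbne
          rw [soPhi_split hCne0 hCne1 W 0, soPhi_side hEb hEbne V 0, soPhi_side hFc hFcne V 0]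
          have hEF0 : tls false (E ∪ F) = tls false E ∪ tls false F := tls_union _ _ _
          have hEF1 : tls true (E ∪ F) = tls true E ∪ tls true F := tls_union _ _ _
          cases b
          · -- b = false, c = true
            have hc : c = true := by
              cases c
              · exact absurd rfl hbc
              · rfl
            subst hc
            have h1 : tls false F = ∅ := tls_empty_of_side hFc (by simp)
            have h2 : tls true E = ∅ := tls_empty_of_side hEb (by simp)
            rw [hEF0, hEF1, h1, h2, Finset.union_empty, Finset.empty_union]
            have i1 : soPhi m W 0 (tls false E) ≤ soPhi m (dW m V) 0 (tls false E) := hWdV _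
            have i2 : soPhi m W 0 (tls true F) ≤ soPhi m (dW m V) 0 (tls true F) := hWdV _
            linarith
          · -- b = true, c = false
            have hc : c = false := by
              cases c
              · rfl
              · exact absurd rfl hbc
            subst hc
            have h1 : tls true F = ∅ := tls_empty_of_side hFc (by simp)
            have h2 : tls false E = ∅ := tls_empty_of_side hEb (by simp)
            rw [hEF0, hEF1, h1, h2, Finset.union_empty, Finset.empty_union]
            have i1 : soPhi m W 0 (tls true E) ≤ soPhi m (dW m V) 0 (tls true E) := hWdV _
            have i2 : soPhi m W 0 (tls false F) ≤ soPhi m (dW m V) 0 (tls false F) := hWdV _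
            linarith
      · -- E on side b, F splits
        have hCne0 : (tls false (E ∪ F)).Nonempty := tls_nonempty_union_right hF0
        have hCne1 : (tls true (E ∪ F)).Nonempty := tls_nonempty_union_right hF1
        rw [soPhi_split hCne0 hCne1 W 0, soPhi_side hEb hEbne V 0,
          soPhi_split hF0 hF1 V 0]
        have hEF0 : tls false (E ∪ F) = tls false E ∪ tls false F := tls_union _ _ _
        have hEF1 : tls true (E ∪ F) = tls true E ∪ tls true F := tls_union _ _ _
        cases b
        · -- E on false side
          have h2 : tls true E = ∅ := tls_empty_of_side hEb (by simp)
          rw [hEF0, hEF1, h2, Finset.empty_union]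
          have i1 : soPhi m W 0 (tls false E ∪ tls false F)
              ≤ W (m + 1) m + soPhi m W 0 (tls false E) + soPhi m W 0 (tls false F) :=
            subIH _ _ (hDt false) hEbne hF0
          have i2 : soPhi m W 0 (tls false E) ≤ soPhi m (dW m V) 0 (tls false E) := hWdV _
          have i3 : soPhi m W 0 (tls false F) = soPhi m V 0 (tls false F) := hWV _
          have i4 : soPhi m W 0 (tls true F) = soPhi m V 0 (tls true F) := hWV _
          linarith
        · have h2 : tls false E = ∅ := tls_empty_of_side hEb (by simp)
          rw [hEF0, hEF1, h2, Finset.empty_union]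
          have i1 : soPhi m W 0 (tls true E ∪ tls true F)
              ≤ W (m + 1) m + soPhi m W 0 (tls true E) + soPhi m W 0 (tls true F) :=
            subIH _ _ (hDt true) hEbne hF1
          have i2 : soPhi m W 0 (tls true E) ≤ soPhi m (dW m V) 0 (tls true E) := hWdV _
          have i3 : soPhi m W 0 (tls true F) = soPhi m V 0 (tls true F) := hWV _
          have i4 : soPhi m W 0 (tls false F) = soPhi m V 0 (tls false F) := hWV _
          linarith
    · -- E splits
      have hCne0 : (tls false (E ∪ F)).Nonempty := tls_nonempty_union_left hE0
      have hCne1 : (tls true (E ∪ F)).Nonempty := tls_nonempty_union_left hE1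
      rw [soPhi_split hCne0 hCne1 W 0, soPhi_split hE0 hE1 V 0]
      have hEF0 : tls false (E ∪ F) = tls false E ∪ tls false F := tls_union _ _ _
      have hEF1 : tls true (E ∪ F) = tls true E ∪ tls true F := tls_union _ _ _
      rcases side_cases hF with ⟨c, hFc, hFcne⟩ | ⟨hF0, hF1⟩
      · rw [soPhi_side hFc hFcne V 0]
        cases c
        · have h2 : tls true F = ∅ := tls_empty_of_side hFc (by simp)
          rw [hEF0, hEF1, h2, Finset.union_empty]
          have i1 : soPhi m W 0 (tls false E ∪ tls false F)
              ≤ W (m + 1) m + soPhi m W 0 (tls false E) + soPhi m W 0 (tls false F) :=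
            subIH _ _ (hDt false) hE0 hFcne
          have i2 : soPhi m W 0 (tls false F) ≤ soPhi m (dW m V) 0 (tls false F) := hWdV _
          have i3 : soPhi m W 0 (tls false E) = soPhi m V 0 (tls false E) := hWV _
          have i4 : soPhi m W 0 (tls true E) = soPhi m V 0 (tls true E) := hWV _
          linarith
        · have h2 : tls false F = ∅ := tls_empty_of_side hFc (by simp)
          rw [hEF0, hEF1, h2, Finset.union_empty]
          have i1 : soPhi m W 0 (tls true E ∪ tls true F)
              ≤ W (m + 1) m + soPhi m W 0 (tls true E) + soPhi m W 0 (tls true F) :=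
            subIH _ _ (hDt true) hE1 hFcne
          have i2 : soPhi m W 0 (tls true F) ≤ soPhi m (dW m V) 0 (tls true F) := hWdV _
          have i3 : soPhi m W 0 (tls true E) = soPhi m V 0 (tls true E) := hWV _
          have i4 : soPhi m W 0 (tls false E) = soPhi m V 0 (tls false E) := hWV _
          linarith
      · -- both split
        rw [soPhi_split hF0 hF1 V 0, hEF0, hEF1]
        have i0 : soPhi m W 0 (tls false E ∪ tls false F)
            ≤ W (m + 1) m + soPhi m W 0 (tls false E) + soPhi m W 0 (tls false F) :=
          subIH _ _ (hDt false) hE0 hF0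
        have i1 : soPhi m W 0 (tls true E ∪ tls true F)
            ≤ W (m + 1) m + soPhi m W 0 (tls true E) + soPhi m W 0 (tls true F) :=
          subIH _ _ (hDt true) hE1 hF1
        have i2 : soPhi m W 0 (tls false E) = soPhi m V 0 (tls false E) := hWV _
        have i3 : soPhi m W 0 (tls true E) = soPhi m V 0 (tls true E) := hWV _
        have i4 : soPhi m W 0 (tls false F) = soPhi m V 0 (tls false F) := hWV _
        have i5 : soPhi m W 0 (tls true F) = soPhi m V 0 (tls true F) := hWV _
        linarith

lemma bool_resolve : ∀ {x y z : Bool}, x ≠ y → z ≠ y → x = z := by decide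

/-- Descend a meet-increasing bijection to the subtrees. -/
lemma descend {m : ℕ} {A B : Finset (Leaf (m + 1))} {σ : Leaf (m + 1) → Leaf (m + 1)}
    (hbij : Set.BijOn σ ↑A ↑B)
    (hmeet : ∀ u ∈ A, ∀ v ∈ A, meetAge u v ≤ meetAge (σ u) (σ v))
    {X : Finset (Leaf (m + 1))} (hXA : X ⊆ A) {b c : Bool}
    (hXb : ∀ u ∈ X, u 0 = b) (hXc : ∀ u ∈ X, (σ u) 0 = c)
    (hsurj : ∀ v ∈ B, v 0 = c → ∃ u ∈ X, σ u = v) :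
    ∃ τ : Leaf m → Leaf m, Set.BijOn τ ↑(tls b X) ↑(tls c B) ∧
      ∀ x ∈ tls b X, ∀ y ∈ tls b X, meetAge x y ≤ meetAge (τ x) (τ y) := by
  refine ⟨fun x => Fin.tail (σ (Fin.cons b x)), ⟨?_, ?_, ?_⟩, ?_⟩
  · -- MapsTo
    intro x hx
    rw [Finset.mem_coe, mem_tls] at hx
    have hσ : σ (Fin.cons b x) ∈ B := hbij.mapsTo (hXA hx)
    have hc : (σ (Fin.cons b x)) 0 = c := hXc _ hx
    rw [Finset.mem_coe, mem_tls, ← hc, Fin.cons_self_tail]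
    exact hσ
  · -- InjOn
    intro x hx y hy hxy
    rw [Finset.mem_coe, mem_tls] at hx hy
    have hcx : (σ (Fin.cons b x)) 0 = c := hXc _ hx
    have hcy : (σ (Fin.cons b y)) 0 = c := hXc _ hy
    have hσ : σ (Fin.cons b x) = σ (Fin.cons b y) := by
      rw [← Fin.cons_self_tail (σ (Fin.cons b x)), ← Fin.cons_self_tail (σ (Fin.cons b y)),
        hcx, hcy]
      simp only [Fin.tail] at hxy ⊢
      rw [hxy]
    have := hbij.injOn (Finset.mem_coe.2 (hXA hx)) (Finset.mem_coe.2 (hXA hy)) hσ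
    have := congrArg Fin.tail this
    simpa [Fin.tail_cons] using this
  · -- SurjOn
    intro y hy
    rw [Finset.mem_coe, mem_tls] at hy
    obtain ⟨u, hu, huy⟩ := hsurj _ hy (Fin.cons_zero _ _)
    refine ⟨Fin.tail u, ?_, ?_⟩
    · rw [Finset.mem_coe, mem_tls, ← hXb u hu, Fin.cons_self_tail]
      exact hu
    · show Fin.tail (σ (Fin.cons b (Fin.tail u))) = y
      rw [← hXb u hu, Fin.cons_self_tail, huy, Fin.tail_cons]
  · -- meets
    intro x hx y hy
    rw [mem_tls] at hx hy
    have h1 : meetAge x y = meetAge (Fin.cons b x) (Fin.cons b y) := (meetAge_cons b x y).symm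
    have h2 : meetAge (σ (Fin.cons b x)) (σ (Fin.cons b y))
        = meetAge (Fin.tail (σ (Fin.cons b x))) (Fin.tail (σ (Fin.cons b y))) :=
      meetAge_head_eq ((hXc _ hx).trans (hXc _ hy).symm)
    rw [h1, ← h2]
    exact hmeet _ (hXA hx) _ (hXA hy)

lemma tls_filter_self {m : ℕ} (A : Finset (Leaf (m + 1))) (b : Bool) :
    tls b (A.filter (fun u => u 0 = b)) = tls b A := by
  ext x
  simp only [mem_tls, Finset.mem_filter]
  exact ⟨fun h => h.1, fun h => ⟨h, Fin.cons_zero _ _⟩⟩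

/-- Monotonicity of `soPhi` under meet-increasing bijections. -/
theorem mon_lemma : ∀ (m : ℕ) (G : ℕ → ℕ → ℝ), MonoArr m G →
    ∀ A B : Finset (Leaf m), ∀ σ : Leaf m → Leaf m, Set.BijOn σ ↑A ↑B →
    (∀ u ∈ A, ∀ v ∈ A, meetAge u v ≤ meetAge (σ u) (σ v)) →
    soPhi m G 0 A ≤ soPhi m G 0 B := by
  intro m
  induction m with
  | zero =>
    intro G _ A B σ hbij _
    have huniq : ∀ x y : Leaf 0, x = y := fun x y => funext (fun i => Fin.elim0 i)
    rcases A.eq_empty_or_nonempty with hAe | ⟨a, ha⟩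
    · have hBe : B = ∅ := by
        rcases B.eq_empty_or_nonempty with h | ⟨v, hv⟩
        · exact h
        · exfalso
          obtain ⟨u, hu, _⟩ := hbij.surjOn (Finset.mem_coe.2 hv)
          rw [hAe] at hu
          simpa using hu
      rw [hAe, hBe]
    · have hab : σ a ∈ B := hbij.mapsTo ha
      have hAB : A = B := by
        ext x
        constructor
        · intro _; rw [huniq x (σ a)]; exact hab
        · intro _; rw [huniq x a]; exact ha
      rw [hAB]
  | succ m ih =>
    intro G hG A B σ hbij hmeet
    rcases B.eq_empty_or_nonempty with hBe | hBne
    · have hAe : A = ∅ := by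
        rcases A.eq_empty_or_nonempty with h | ⟨a, ha⟩
        · exact h
        · exfalso
          have := hbij.mapsTo ha
          rw [hBe] at this
          simpa using this
      rw [hAe, hBe]
    · have hAne : A.Nonempty := by
        obtain ⟨v, hv⟩ := hBne
        have := hbij.surjOn (Finset.mem_coe.2 hv)
        obtain ⟨u, hu, _⟩ := this
        exact ⟨u, Finset.mem_coe.1 hu⟩
      have hGm : MonoArr m G := monoArr_mono hG
      have hGd : MonoArr m (dW m G) := monoArr_dW hG
      rcases side_cases hBne with ⟨c, hBc, hBcne⟩ | ⟨hB0, hB1⟩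
      · -- B on one side: A is on one side too
        have hAside : ∀ u ∈ A, ∀ v ∈ A, u 0 = v 0 := by
          intro u hu v hv
          by_contra hne
          have h1 : meetAge u v = m + 1 := meetAge_head_ne hne
          have h2 := hmeet u hu v hv
          have h3 : meetAge (σ u) (σ v) ≤ m :=
            meetAge_head_eq_le ((hBc _ (hbij.mapsTo hu)).trans (hBc _ (hbij.mapsTo hv)).symm)
          omega
        obtain ⟨a, ha⟩ := hAne
        have hAb : ∀ u ∈ A, u 0 = a 0 := fun u hu => hAside u hu a ha
        obtain ⟨τ, hτbij, hτmeet⟩ := descend hbij hmeet (le_refl A) hAb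
          (fun u hu => hBc _ (hbij.mapsTo hu))
          (fun v hv _ => by
            obtain ⟨u, hu, huv⟩ := hbij.surjOn (Finset.mem_coe.2 hv)
            exact ⟨u, Finset.mem_coe.1 hu, huv⟩)
        rw [soPhi_side hAb (tls_nonempty_of ha rfl) G 0, soPhi_side hBc hBcne G 0]
        exact ih (dW m G) hGd _ _ τ hτbij (fun x hx y hy => hτmeet x hx y hy)
      · -- B splits
        rcases side_cases hAne with ⟨b, hAb, hAbne⟩ | ⟨hA0, hA1⟩
        · -- A on one side b, B splits
          set X := A.filter (fun u => (σ u) 0 = false) with hX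
          set Y := A.filter (fun u => (σ u) 0 = true) with hY
          have hXA : X ⊆ A := Finset.filter_subset _ _
          have hYA : Y ⊆ A := Finset.filter_subset _ _
          have hXY : A = X ∪ Y := by
            ext u
            simp only [hX, hY, Finset.mem_union, Finset.mem_filter]
            constructor
            · intro hu
              cases h0 : (σ u) 0
              · exact Or.inl ⟨hu, rfl⟩
              · exact Or.inr ⟨hu, rfl⟩
            · rintro (⟨hu, _⟩ | ⟨hu, _⟩) <;> exact hu
          have hXne : X.Nonempty := by
            obtain ⟨y, hy⟩ := hB0
            rw [mem_tls] at hy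
            obtain ⟨u, hu, huy⟩ := hbij.surjOn (Finset.mem_coe.2 hy)
            refine ⟨u, Finset.mem_filter.2 ⟨Finset.mem_coe.1 hu, ?_⟩⟩
            rw [huy]; exact Fin.cons_zero _ _
          have hYne : Y.Nonempty := by
            obtain ⟨y, hy⟩ := hB1
            rw [mem_tls] at hy
            obtain ⟨u, hu, huy⟩ := hbij.surjOn (Finset.mem_coe.2 hy)
            refine ⟨u, Finset.mem_filter.2 ⟨Finset.mem_coe.1 hu, ?_⟩⟩
            rw [huy]; exact Fin.cons_zero _ _
          have hXb : ∀ u ∈ X, u 0 = b := fun u hu => hAb u (hXA hu)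
          have hYb : ∀ u ∈ Y, u 0 = b := fun u hu => hAb u (hYA hu)
          obtain ⟨τ₀, hτ₀bij, hτ₀meet⟩ := descend hbij hmeet hXA hXb
            (fun u hu => (Finset.mem_filter.1 hu).2)
            (fun v hv hvc => by
              obtain ⟨u, hu, huv⟩ := hbij.surjOn (Finset.mem_coe.2 hv)
              exact ⟨u, Finset.mem_filter.2 ⟨Finset.mem_coe.1 hu, by rw [huv]; exact hvc⟩, huv⟩)
          obtain ⟨τ₁, hτ₁bij, hτ₁meet⟩ := descend hbij hmeet hYA hYb
            (fun u hu => (Finset.mem_filter.1 hu).2)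
            (fun v hv hvc => by
              obtain ⟨u, hu, huv⟩ := hbij.surjOn (Finset.mem_coe.2 hv)
              exact ⟨u, Finset.mem_filter.2 ⟨Finset.mem_coe.1 hu, by rw [huv]; exact hvc⟩, huv⟩)
          have hXYt : tls b A = tls b X ∪ tls b Y := by
            rw [hXY, tls_union]
          have hXtne : (tls b X).Nonempty := by
            obtain ⟨u, hu⟩ := hXne
            exact tls_nonempty_of hu (hXb u hu)
          have hYtne : (tls b Y).Nonempty := by
            obtain ⟨u, hu⟩ := hYne
            exact tls_nonempty_of hu (hYb u hu)
          have hDt : Disjoint (tls b X) (tls b Y) := by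
            apply tls_disjoint
            rw [Finset.disjoint_left]
            intro u hu hu'
            have h1 := (Finset.mem_filter.1 hu).2
            have h2 := (Finset.mem_filter.1 hu').2
            rw [h1] at h2
            exact Bool.noConfusion h2
          have step1 : soPhi (m + 1) G 0 A = soPhi m (dW m G) 0 (tls b X ∪ tls b Y) := by
            rw [soPhi_side hAb hAbne G 0, hXYt]
          have step2 : soPhi m (dW m G) 0 (tls b X ∪ tls b Y)
              ≤ G (m + 2) (m + 1) + soPhi m G 0 (tls b X) + soPhi m G 0 (tls b Y) := by
            refine lift_lemma m G (dW m G) (G (m + 2) (m + 1)) hGm hGd ?_ ?_ ?_ _ _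
              hDt hXtne hYtne
            · intro k l h1 h2
              unfold dW
              rw [if_neg (by omega)]
            · intro l hl
              unfold dW
              rw [if_pos rfl]
              exact hG (m + 1) (m + 2) l l (by omega) (by omega) (by omega) (by omega) (le_refl _)
            · intro l hl
              unfold dW
              rw [if_pos rfl]
              exact hG (m + 2) (m + 2) l (m + 1) (by omega) (by omega) (le_refl _) (by omega)
                (by omega)
          have step3 : soPhi m G 0 (tls b X) ≤ soPhi m G 0 (tls false B) :=
            ih G hGm _ _ τ₀ hτ₀bij (fun x hx y hy => hτ₀meet x hx y hy)
          have step4 : soPhi m G 0 (tls b Y) ≤ soPhi m G 0 (tls true B) :=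
            ih G hGm _ _ τ₁ hτ₁bij (fun x hx y hy => hτ₁meet x hx y hy)
          have step5 : soPhi (m + 1) G 0 B
              = G (m + 2) (m + 1) + 0 + soPhi m G 0 (tls false B) + soPhi m G 0 (tls true B) :=
            soPhi_split hB0 hB1 G 0
          linarith [step1, step2, step3, step4, step5]
        · -- both split
          have hA0' := hA0
          have hA1' := hA1
          obtain ⟨x₀, hx₀⟩ := hA0'
          obtain ⟨x₁, hx₁⟩ := hA1'
          rw [mem_tls] at hx₀ hx₁
          have hkey : ∀ u ∈ A, ∀ v ∈ A, u 0 ≠ v 0 → (σ u) 0 ≠ (σ v) 0 := by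
            intro u hu v hv hne hcc
            have h1 : meetAge u v = m + 1 := meetAge_head_ne hne
            have h2 := hmeet u hu v hv
            have h3 : meetAge (σ u) (σ v) ≤ m := meetAge_head_eq_le hcc
            omega
          have bool_of_ne : ∀ {x y : Bool}, y ≠ x → x = !y := by decide
          have bool_ne_not : ∀ {x z : Bool}, x ≠ !z → x = z := by decide
          have bool_true_of_ne_false : ∀ {x : Bool}, x ≠ false → x = true := by decide
          have bool_not_self : ∀ {x : Bool}, x ≠ !x := by decide
          obtain ⟨c, hc⟩ : ∃ c, (σ (Fin.cons false x₀)) 0 = c := ⟨_, rfl⟩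
          have hne01 : (σ (Fin.cons false x₀)) 0 ≠ (σ (Fin.cons true x₁)) 0 :=
            hkey _ hx₀ _ hx₁ (by rw [Fin.cons_zero, Fin.cons_zero]; decide)
          have hσu₁ : (σ (Fin.cons true x₁)) 0 = !c := by
            rw [← hc]
            exact bool_of_ne hne01
          have claim1 : ∀ u ∈ A, u 0 = false → (σ u) 0 = c := by
            intro u hu h0
            have h1 : (σ u) 0 ≠ (σ (Fin.cons true x₁)) 0 :=
              hkey u hu _ hx₁ (by rw [h0, Fin.cons_zero]; decide)
            rw [hσu₁] at h1
            exact bool_ne_not h1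
          have claim2 : ∀ u ∈ A, u 0 = true → (σ u) 0 = !c := by
            intro u hu h0
            have h1 : (σ u) 0 ≠ (σ (Fin.cons false x₀)) 0 :=
              hkey u hu _ hx₀ (by rw [h0, Fin.cons_zero]; decide)
            rw [hc] at h1
            exact bool_of_ne (fun hcc => h1 hcc.symm)
          set X := A.filter (fun u => u 0 = false) with hX
          set Y := A.filter (fun u => u 0 = true) with hY
          have hXA : X ⊆ A := Finset.filter_subset _ _
          have hYA : Y ⊆ A := Finset.filter_subset _ _
          obtain ⟨τ₀, hτ₀bij, hτ₀meet⟩ := descend hbij hmeet hXA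
            (fun u hu => (Finset.mem_filter.1 hu).2)
            (fun u hu => claim1 u (hXA hu) (Finset.mem_filter.1 hu).2)
            (fun v hv hvc => by
              obtain ⟨u, hu, huv⟩ := hbij.surjOn (Finset.mem_coe.2 hv)
              have hu' := Finset.mem_coe.1 hu
              have h0 : u 0 = false := by
                by_contra h0
                have h0' : u 0 = true := bool_true_of_ne_false h0
                have h2 := claim2 u hu' h0'
                rw [huv] at h2
                rw [hvc] at h2
                exact bool_not_self h2
              exact ⟨u, Finset.mem_filter.2 ⟨hu', h0⟩, huv⟩)
          obtain ⟨τ₁, hτ₁bij, hτ₁meet⟩ := descend hbij hmeet hYA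
            (fun u hu => (Finset.mem_filter.1 hu).2)
            (fun u hu => claim2 u (hYA hu) (Finset.mem_filter.1 hu).2)
            (fun v hv hvc => by
              obtain ⟨u, hu, huv⟩ := hbij.surjOn (Finset.mem_coe.2 hv)
              have hu' := Finset.mem_coe.1 hu
              have h0 : u 0 = true := by
                by_contra h0
                have h0' : u 0 = false := by
                  cases hu0 : u 0
                  · rfl
                  · exact absurd hu0 h0
                have h2 := claim1 u hu' h0'
                rw [huv] at h2
                rw [h2] at hvc
                exact bool_not_self hvc
              exact ⟨u, Finset.mem_filter.2 ⟨hu', h0⟩, huv⟩)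
          have hXt : tls false X = tls false A := tls_filter_self A false
          have hYt : tls true Y = tls true A := tls_filter_self A true
          rw [hXt] at hτ₀bij hτ₀meet
          rw [hYt] at hτ₁bij hτ₁meet
          have step3 : soPhi m G 0 (tls false A) ≤ soPhi m G 0 (tls c B) :=
            ih G hGm _ _ τ₀ hτ₀bij (fun x hx y hy => hτ₀meet x hx y hy)
          have step4 : soPhi m G 0 (tls true A) ≤ soPhi m G 0 (tls (!c) B) :=
            ih G hGm _ _ τ₁ hτ₁bij (fun x hx y hy => hτ₁meet x hx y hy)
          rw [soPhi_split hA0 hA1 G 0, soPhi_split hB0 hB1 G 0]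
          cases c
          · simp only [Bool.not_false] at step4
            linarith
          · simp only [Bool.not_true] at step4
            linarith

/-- Proposition 1.17: if `(h_{k,ℓ})_{0 ≤ ℓ < k ≤ n+1}` is a
non-decreasing triangular array and `h ≥ h_{n+1,n}`, then the second order branching
clustering function with parameters `(h_{k,ℓ})` and `h` is a monotone clustering
function. -/
theorem stmt11 (n : ℕ) (hn : 1 ≤ n) (H : ℕ → ℕ → ℝ) (h : ℝ)
    (hmono : ∀ k k' l l' : ℕ, l < k → l' < k' → k ≤ k' → k' ≤ n + 1 → l ≤ l' →
      H k l ≤ H k' l')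
    (hh : H (n + 1) n ≤ h) :
    IsMonotoneClusteringFn (soPhi n H h) := by
  have hMA : MonoArr n H := fun k k' l l' h1 h2 h3 h4 h5 => hmono k k' l l' h1 h2 h3 h4 h5
  have hempty : soPhi n H h ∅ = 0 := by rw [soPhi, if_pos rfl]
  have hmon : ∀ A B : Finset (Leaf n), MoreClustered A B → soPhi n H h A ≤ soPhi n H h B := by
    rintro A B ⟨σ, hbij, hmeet⟩
    rcases A.eq_empty_or_nonempty with hAe | hAne
    · have hBe : B = ∅ := by
        rcases B.eq_empty_or_nonempty with hB | ⟨v, hv⟩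
        · exact hB
        · exfalso
          obtain ⟨u, hu, _⟩ := hbij.surjOn (Finset.mem_coe.2 hv)
          rw [hAe] at hu
          simpa using hu
      rw [hAe, hBe]
    · have hA' : A ≠ ∅ := hAne.ne_empty
      have hB' : B ≠ ∅ := by
        obtain ⟨a, ha⟩ := hAne
        exact Finset.ne_empty_of_mem (Finset.mem_coe.1 (hbij.mapsTo (Finset.mem_coe.2 ha)))
      rw [soPhi_shift H h hA', soPhi_shift H h hB']
      have := mon_lemma n H hMA A B σ hbij hmeet
      linarith
  refine ⟨⟨hempty, ?_⟩, hmon, ?_⟩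
  · -- isomorphism invariance
    rintro A B ⟨σ, hbij, hmeq⟩
    apply le_antisymm
    · exact hmon A B ⟨σ, hbij, fun u hu v hv => (hmeq u hu v hv).ge⟩
    · have hinv := Set.BijOn.invOn_invFunOn hbij
      set g := Function.invFunOn σ ↑A with hg
      have hgbij : Set.BijOn g ↑B ↑A := Set.BijOn.symm hinv.symm hbij
      refine hmon B A ⟨g, hgbij, fun u hu v hv => ?_⟩
      have hgu : g u ∈ A := Finset.mem_coe.1 (hgbij.mapsTo (Finset.mem_coe.2 hu))
      have hgv : g v ∈ A := Finset.mem_coe.1 (hgbij.mapsTo (Finset.mem_coe.2 hv))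
      have h1 : σ (g u) = u := hinv.2 (Finset.mem_coe.2 hu)
      have h2 : σ (g v) = v := hinv.2 (Finset.mem_coe.2 hv)
      have h3 := hmeq _ hgu _ hgv
      rw [h1, h2] at h3
      exact h3.le
  · -- subadditivity
    intro A B hD
    rcases A.eq_empty_or_nonempty with hAe | hAne
    · rw [hAe, Finset.empty_union, hempty]
      linarith
    rcases B.eq_empty_or_nonempty with hBe | hBne
    · rw [hBe, Finset.union_empty, hempty]
      linarith
    have hsub := lift_lemma n H H h hMA hMA (fun _ _ _ _ => rfl) (fun l _ => le_refl _)
      (fun l hl => le_trans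
        (hmono (n + 1) (n + 1) l n (by omega) (by omega) (le_refl _) (by omega) hl) hh)
      A B hD hAne hBne
    have hABne : A ∪ B ≠ ∅ := by
      obtain ⟨a, ha⟩ := hAne
      exact Finset.ne_empty_of_mem (Finset.mem_union_left _ ha)
    rw [soPhi_shift H h hABne, soPhi_shift H h hAne.ne_empty, soPhi_shift H h hBne.ne_empty]
    linarith


end PWC
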